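/- arXiv:1906.12112 — 2 statements merged into one kernel-verified Lean document; each statement's English description precedes it below -/
import Mathlib

section
/- Let M be symmetric positive definite, s ≠ 0, l = Ms, and τ₁ ≥ 1. If H_k is symmetric with H_k ⪯ τ₁ M^{-1} (i.e., τ₁ M^{-1} − H_k is positive semidefinite), then the BFGS update H_{k+1} = (I − s lᵀ/(sᵀl)) H_k (I − l sᵀ/(sᵀl)) + s sᵀ/(sᵀl) satisfies H_{k+1} ⪯ τ₁ M^{-1}. -/
open Matrix

private lemma psd_smul_aux {n : ℕ} {A : Matrix (Fin n) (Fin n) ℝ} (hA : A.PosSemidef)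
    {r : ℝ} (hr : 0 ≤ r) : (r • A).PosSemidef := by
  rw [posSemidef_iff_dotProduct_mulVec]
  constructor
  · unfold Matrix.IsHermitian
    rw [conjTranspose_smul, hA.1]
    simp
  · intro x
    rw [smul_mulVec, dotProduct_smul, smul_eq_mul]
    exact mul_nonneg hr (hA.dotProduct_mulVec_nonneg x)

private lemma psd_vmv {n : ℕ} (s : Fin n → ℝ) : (vecMulVec s s).PosSemidef := by
  rw [vecMulVec_eq (ι := Unit)]
  have h := posSemidef_self_mul_conjTranspose (replicateCol Unit s)
  rwa [conjTranspose_replicateCol, star_trivial] at h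

theorem stmt5 {n : ℕ} (M : Matrix (Fin n) (Fin n) ℝ) (hM : M.PosDef)
    (s : Fin n → ℝ) (hs : s ≠ 0) (l : Fin n → ℝ) (hl : l = M.mulVec s)
    (τ₁ : ℝ) (hτ₁ : 1 ≤ τ₁)
    (Hk : Matrix (Fin n) (Fin n) ℝ) (hHkSymm : Hk.IsSymm)
    (hHk : (τ₁ • M⁻¹ - Hk).PosSemidef)
    (Hk1 : Matrix (Fin n) (Fin n) ℝ)
    (hHk1 : Hk1 = (1 - (s ⬝ᵥ l)⁻¹ • vecMulVec s l) * Hk * (1 - (s ⬝ᵥ l)⁻¹ • vecMulVec l s)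
        + (s ⬝ᵥ l)⁻¹ • vecMulVec s s) :
    (τ₁ • M⁻¹ - Hk1).PosSemidef := by
  have hdet : IsUnit M.det := isUnit_iff_ne_zero.mpr (ne_of_gt hM.det_pos)
  have hMinv : M⁻¹ * M = 1 := nonsing_inv_mul M hdet
  have hMl : M⁻¹ *ᵥ l = s := by rw [hl, mulVec_mulVec, hMinv, one_mulVec]
  have hMT : Mᵀ = M := by
    have := hM.isHermitian.eq
    simpa using this
  have hMinvT : M⁻¹ᵀ = M⁻¹ := by rw [transpose_nonsing_inv, hMT]
  set c : ℝ := s ⬝ᵥ l with hc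
  have hcpos : 0 < c := by rw [hc, hl]; simpa using hM.dotProduct_mulVec_pos hs
  have hcne : c ≠ 0 := ne_of_gt hcpos
  set V : Matrix (Fin n) (Fin n) ℝ := vecMulVec s s with hV
  set P : Matrix (Fin n) (Fin n) ℝ := 1 - c⁻¹ • vecMulVec s l with hP
  have hPT : Pᵀ = 1 - c⁻¹ • vecMulVec l s := by
    ext i j
    simp [hP, vecMulVec_apply, one_apply, mul_comm, eq_comm]
  -- helper products
  have h1 : vecMulVec s l * M⁻¹ = V := by
    ext i j
    simp only [mul_apply, vecMulVec_apply, hV]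
    have h : ∑ k, s i * l k * M⁻¹ k j = s i * (M⁻¹ᵀ *ᵥ l) j := by
      simp only [mulVec, dotProduct, transpose_apply, Finset.mul_sum]
      exact Finset.sum_congr rfl fun k _ => by ring
    rw [h, hMinvT, hMl]
  have h2 : M⁻¹ * vecMulVec l s = V := by
    ext i j
    simp only [mul_apply, vecMulVec_apply, hV]
    have h : ∑ k, M⁻¹ i k * (l k * s j) = (M⁻¹ *ᵥ l) i * s j := by
      simp only [mulVec, dotProduct, Finset.sum_mul]
      exact Finset.sum_congr rfl fun k _ => by ring
    rw [h, hMl]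
  have h3 : V * vecMulVec l s = c • V := by
    ext i j
    simp only [mul_apply, vecMulVec_apply, hV, Matrix.smul_apply, smul_eq_mul, hc, dotProduct]
    rw [Finset.sum_mul]
    exact Finset.sum_congr rfl fun k _ => by ring
  have e1 : P * M⁻¹ = M⁻¹ - c⁻¹ • V := by
    rw [hP, sub_mul, one_mul, smul_mul_assoc, h1]
  have hPMinv : P * M⁻¹ * Pᵀ = M⁻¹ - c⁻¹ • V := by
    rw [e1, hPT, mul_sub, mul_one, mul_smul_comm, sub_mul, h2, smul_mul_assoc, h3,
      smul_smul, inv_mul_cancel₀ hcne, one_smul, sub_self, smul_zero, sub_zero]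
  have hPMP : P * (τ₁ • M⁻¹) * Pᵀ = τ₁ • M⁻¹ - (τ₁ * c⁻¹) • V := by
    have h : P * (τ₁ • M⁻¹) * Pᵀ = τ₁ • (P * M⁻¹ * Pᵀ) := by
      rw [mul_smul_comm, smul_mul_assoc]
    rw [h, hPMinv, smul_sub, smul_smul]
  have key : τ₁ • M⁻¹ - Hk1 = P * (τ₁ • M⁻¹ - Hk) * Pᵀ + ((τ₁ - 1) * c⁻¹) • V := by
    rw [hHk1]
    have expand : P * (τ₁ • M⁻¹ - Hk) * Pᵀ = P * (τ₁ • M⁻¹) * Pᵀ - P * Hk * Pᵀ := by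
      rw [mul_sub, sub_mul]
    have hcoef : (τ₁ - 1) * c⁻¹ = τ₁ * c⁻¹ - c⁻¹ := by ring
    rw [expand, hPMP, ← hPT, hcoef, sub_smul]
    abel
  rw [key]
  exact (hHk.mul_mul_conjTranspose_same P).add
    (psd_smul_aux (psd_vmv s) (mul_nonneg (by linarith) (le_of_lt (inv_pos.mpr hcpos))))
end

section
/- Let M be a symmetric positive definite matrix, s ≠ 0, l = Ms, and B_k symmetric positive definite. Then the BFGS update B_{k+1} = B_k + llᵀ/(lᵀs) − B_k s sᵀ B_k/(sᵀ B_k s) is symmetric positive definite. -/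
open Matrix

lemma dot_vmv {n : ℕ} (x u v : Fin n → ℝ) :
    x ⬝ᵥ (vecMulVec u v *ᵥ x) = (x ⬝ᵥ u) * (v ⬝ᵥ x) := by
  simp only [dotProduct, mulVec, vecMulVec_apply, Finset.mul_sum, Finset.sum_mul]
  rw [Finset.sum_comm]
  apply Finset.sum_congr rfl; intro j _
  apply Finset.sum_congr rfl; intro i _
  ring

theorem stmt17 {n : ℕ} (M : Matrix (Fin n) (Fin n) ℝ) (hM : M.PosDef)
    (s : Fin n → ℝ) (hs : s ≠ 0) (l : Fin n → ℝ) (hl : l = M.mulVec s)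
    (Bk : Matrix (Fin n) (Fin n) ℝ) (hBk : Bk.PosDef)
    (Bk1 : Matrix (Fin n) (Fin n) ℝ)
    (hBk1 : Bk1 = Bk + (l ⬝ᵥ s)⁻¹ • vecMulVec l l
        - (s ⬝ᵥ Bk.mulVec s)⁻¹ • vecMulVec (Bk.mulVec s) (Bk.mulVec s)) :
    Bk1.PosDef := by
  have hBT : Bkᵀ = Bk := by
    have := hBk.1
    simpa [Matrix.IsHermitian, conjTranspose_eq_transpose_of_trivial] using this
  have ht : 0 < l ⬝ᵥ s := by
    have := hM.dotProduct_mulVec_pos hs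
    simpa [hl, dotProduct_comm] using this
  have hc : 0 < s ⬝ᵥ Bk *ᵥ s := by simpa using hBk.dotProduct_mulVec_pos hs
  set t := l ⬝ᵥ s with htdef
  set c := s ⬝ᵥ Bk *ᵥ s with hcdef
  rw [posDef_iff_dotProduct_mulVec]
  constructor
  · rw [hBk1]
    have h1 : (t⁻¹ • vecMulVec l l).IsHermitian := by
      ext i j
      simp [conjTranspose_apply, vecMulVec_apply, mul_comm]
    have h2 : (c⁻¹ • vecMulVec (Bk *ᵥ s) (Bk *ᵥ s)).IsHermitian := by
      ext i j
      simp [conjTranspose_apply, vecMulVec_apply, mul_comm]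
    exact (hBk.1.add h1).sub h2
  · intro x hx
    have hx' : x ≠ 0 := by simpa using hx
    set a := x ⬝ᵥ Bk *ᵥ x with hadef
    set b := x ⬝ᵥ Bk *ᵥ s with hbdef
    set u := x ⬝ᵥ l with hudef
    have hq : (star x) ⬝ᵥ Bk1 *ᵥ x = a + t⁻¹ * (u * (l ⬝ᵥ x)) - c⁻¹ * (b * ((Bk *ᵥ s) ⬝ᵥ x)) := by
      simp [hBk1, sub_mulVec, add_mulVec, smul_mulVec, dotProduct_add,
        dotProduct_sub, dotProduct_smul, dot_vmv, smul_eq_mul, hadef, hbdef, hudef]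
    have hlx : l ⬝ᵥ x = u := by rw [hudef, dotProduct_comm]
    have hbsx : (Bk *ᵥ s) ⬝ᵥ x = b := by
      rw [hbdef, dotProduct_comm, dotProduct_mulVec, ← mulVec_transpose, hBT]
    have hsx : s ⬝ᵥ Bk *ᵥ x = b := by
      rw [hbdef, dotProduct_mulVec, ← mulVec_transpose, hBT, dotProduct_comm]
    rw [hq, hlx, hbsx]
    set y := c • x - b • s with hydef
    have hqy : y ⬝ᵥ Bk *ᵥ y = c * (c * a - b * b) := by
      simp only [hydef, mulVec_sub, mulVec_smul, dotProduct_sub, sub_dotProduct,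
        dotProduct_smul, smul_dotProduct, smul_eq_mul, ← hadef, ← hbdef, ← hcdef, hsx]
      ring
    by_cases hy : y = 0
    · -- x is a multiple of s
      have hxcs : c • x = b • s := by
        have h0 : c • x - b • s = 0 := by rw [← hydef]; exact hy
        exact sub_eq_zero.mp h0
      have hb : b ≠ 0 := by
        intro hb0
        apply hx'
        have : c • x = 0 := by rw [hxcs, hb0, zero_smul]
        rcases smul_eq_zero.mp this with h | h
        · exact absurd h hc.ne'
        · exact h
      have e1 : c * (c * a) = c * (b * b) := by
        have h := congrArg (fun v => v ⬝ᵥ Bk *ᵥ v) hxcs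
        simp only [mulVec_smul, dotProduct_smul, smul_dotProduct, smul_eq_mul,
          ← hadef, ← hbdef, ← hcdef, hsx] at h
        linarith [h]
      have e1' : c * a = b * b := mul_left_cancel₀ hc.ne' e1
      have e2 : c * u = b * t := by
        have h := congrArg (fun v => v ⬝ᵥ l) hxcs
        simp only [smul_dotProduct, smul_eq_mul, ← hudef] at h
        rw [h, htdef, dotProduct_comm]
      have hu : u ≠ 0 := by
        intro hu0
        have : b * t = 0 := by rw [← e2, hu0, mul_zero]
        exact hb ((mul_eq_zero.mp this).resolve_right ht.ne')
      have h2 : a - c⁻¹ * (b * b) = 0 := by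
        rw [← e1']
        field_simp
        ring
      have h3 : 0 < t⁻¹ * (u * u) :=
        mul_pos (inv_pos.mpr ht) (mul_self_pos.mpr hu)
      linarith
    · have hqy' : 0 < y ⬝ᵥ Bk *ᵥ y := by simpa using hBk.dotProduct_mulVec_pos hy
      rw [hqy] at hqy'
      have h1 : 0 < c * a - b * b := by nlinarith [hqy']
      have hci : 0 < c⁻¹ := inv_pos.mpr hc
      have h2 : a - c⁻¹ * (b * b) = c⁻¹ * (c * a - b * b) := by
        field_simp
      have h3 : 0 ≤ t⁻¹ * (u * u) :=
        mul_nonneg (inv_nonneg.mpr ht.le) (mul_self_nonneg u)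
      nlinarith [mul_pos hci h1]
end
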